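/- Let $\rho:\mathbb{R}\to[0,1]$ be even, continuous, nondecreasing on $[0,\infty)$, with $\rho(0)=0$, $\sup_u\rho(u)=1$, and strictly increasing on $\{u\ge 0:\rho(u)<1\}$. Let $u$ be a random variable with even density $f_0$ that is nonincreasing in $|t|$ and strictly decreasing in $|t|$ in a neighbourhood of $0$. Then for every $c\ne 0$, $\mathbb{E}\,\rho(u-c)>\mathbb{E}\,\rho(u)$. -/

import Mathlib

open MeasureTheory

lemma f0_meas' (f0 : ℝ → ℝ) (he : ∀ t, f0 (-t) = f0 t)
    (hm : ∀ s t : ℝ, |s| ≤ |t| → f0 t ≤ f0 s) : Measurable f0 := by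
  have hA : Antitone (fun x : ℝ => f0 (max x 0)) := by
    intro x y hxy
    apply hm
    rw [abs_of_nonneg (le_max_right x 0), abs_of_nonneg (le_max_right y 0)]
    exact max_le_max hxy le_rfl
  have hEq : f0 = (fun x : ℝ => f0 (max x 0)) ∘ abs := by
    funext t
    simp only [Function.comp_apply, max_eq_left (abs_nonneg t)]
    rcases le_or_gt 0 t with h | h
    · rw [abs_of_nonneg h]
    · rw [abs_of_neg h, he]
  rw [hEq]
  exact hA.measurable.comp measurable_abs

lemma key_ineq (f0 : ℝ → ℝ) (hf0nn : ∀ t, 0 ≤ f0 t)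
    (hf0even : ∀ t, f0 (-t) = f0 t)
    (hf0mono : ∀ s t : ℝ, |s| ≤ |t| → f0 t ≤ f0 s)
    (hf0strict : ∃ ε > (0:ℝ), ∀ s t : ℝ, |s| < |t| → |t| ≤ ε → f0 t < f0 s)
    (hf0meas : Measurable f0) (hf0int : Integrable f0)
    (ρ : ℝ → ℝ) (hρc : Continuous ρ) (hρe : ∀ t, ρ (-t) = ρ t) (hρz : ρ 0 = 0)
    (hρnn : ∀ t, 0 ≤ ρ t) (hρle : ∀ t, ρ t ≤ 1)
    (hρmono : ∀ s t : ℝ, 0 ≤ s → s ≤ t → ρ s ≤ ρ t)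
    (hρstrict : ∀ s t : ℝ, 0 ≤ s → s < t → ρ t < 1 → ρ s < ρ t)
    (c : ℝ) (hc : c ≠ 0) :
    ∫ t, ρ t * f0 t < ∫ t, ρ (t - c) * f0 t := by
  have hρabs : ∀ t, ρ |t| = ρ t := by
    intro t; rcases abs_choice t with h | h
    · rw [h]
    · rw [h, hρe]
  have hf0abs : ∀ t, f0 |t| = f0 t := by
    intro t; rcases abs_choice t with h | h
    · rw [h]
    · rw [h, hf0even]
  have hρmono' : ∀ s t : ℝ, |s| ≤ |t| → ρ s ≤ ρ t := by
    intro s t h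
    rw [← hρabs s, ← hρabs t]
    exact hρmono _ _ (abs_nonneg s) h
  -- integrability of the four products
  have hb : ∀ φ w : ℝ → ℝ, Continuous φ → (∀ t, 0 ≤ φ t) → (∀ t, φ t ≤ 1) →
      Measurable w → (∀ t, 0 ≤ w t) → Integrable w → Integrable (fun t => φ t * w t) := by
    intro φ w hφc hφ0 hφ1 hwm hw0 hwi
    refine hwi.mono ((hφc.measurable.mul hwm).aestronglyMeasurable) (ae_of_all _ fun t => ?_)
    rw [Real.norm_eq_abs, Real.norm_eq_abs, abs_mul, abs_of_nonneg (hφ0 t),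
      abs_of_nonneg (hw0 t)]
    exact mul_le_of_le_one_left (hw0 t) (hφ1 t)
  have hρcc : Continuous (fun t : ℝ => ρ (t + c)) := hρc.comp (continuous_add_right c)
  have hf0mc : Measurable (fun t : ℝ => f0 (t + c)) := hf0meas.comp (measurable_add_const c)
  have i3 : Integrable (fun t => ρ t * f0 t) := hb ρ f0 hρc hρnn hρle hf0meas hf0nn hf0int
  have i1 : Integrable (fun t => ρ (t + c) * f0 t) :=
    hb _ f0 hρcc (fun t => hρnn _) (fun t => hρle _) hf0meas hf0nn hf0int
  have i2 : Integrable (fun t => ρ (t + c) * f0 (t + c)) := i3.comp_add_right c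
  have i4 : Integrable (fun t => ρ t * f0 (t + c)) :=
    hb ρ _ hρc hρnn hρle hf0mc (fun t => hf0nn _) (hf0int.comp_add_right c)
  -- translation / reflection identities
  have e2 : ∫ t, ρ (t + c) * f0 (t + c) = ∫ t, ρ t * f0 t :=
    integral_add_right_eq_self (μ := volume) (fun t => ρ t * f0 t) c
  have eB : ∫ t, ρ (t - c) * f0 t = ∫ t, ρ t * f0 (t + c) := by
    have h := integral_add_right_eq_self (μ := volume) (fun t => ρ (t - c) * f0 t) c
    simp only [add_sub_cancel_right] at h
    exact h.symm
  have eBB : ∫ t, ρ t * f0 (t + c) = ∫ t, ρ (t + c) * f0 t := by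
    have h1 : ∫ t, ρ t * f0 (t + c) = ∫ t, ρ t * f0 (c - t) := by
      have h := integral_neg_eq_self (fun t => ρ t * f0 (t + c)) volume
      rw [← h]
      congr 1; funext t
      rw [hρe, neg_add_eq_sub]
    have h2 : ∫ t, ρ t * f0 (c - t) = ∫ t, ρ (t + c) * f0 t := by
      have h := integral_add_right_eq_self (μ := volume) (fun t => ρ t * f0 (c - t)) c
      rw [← h]
      congr 1; funext t
      have : c - (t + c) = -t := by ring
      rw [this, hf0even]
    rw [h1, h2]
  set h : ℝ → ℝ := fun t => (ρ (t + c) - ρ t) * (f0 t - f0 (t + c)) with hh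
  have hint : Integrable h :=
    ((i1.sub i2).sub (i3.sub i4)).congr (ae_of_all _ fun t => by simp only [hh, Pi.sub_apply]; ring)
  have hval : ∫ t, h t =
      2 * ((∫ t, ρ (t - c) * f0 t) - ∫ t, ρ t * f0 t) := by
    have hs12 := integral_sub i1 i2
    have hs34 := integral_sub i3 i4
    have hs := integral_sub (i1.sub i2) (i3.sub i4)
    simp only [Pi.sub_apply] at hs
    have hcong : ∫ t, h t = ∫ a, ((ρ (a + c) * f0 a - ρ (a + c) * f0 (a + c)) -
        (ρ a * f0 a - ρ a * f0 (a + c))) :=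
      integral_congr_ae (ae_of_all _ fun t => by simp only [hh]; ring)
    rw [hcong, hs, hs12, hs34, e2, ← eBB, ← eB]
    ring
  -- pointwise nonnegativity
  have hnn : ∀ t, 0 ≤ h t := by
    intro t
    rcases le_total |t| |t + c| with hle | hle
    · exact mul_nonneg (sub_nonneg.2 (hρmono' _ _ hle))
        (sub_nonneg.2 (hf0mono _ _ hle))
    · have h1 := sub_nonpos.2 (hρmono' _ _ hle)
      have h2 := sub_nonpos.2 (hf0mono _ _ hle)
      show 0 ≤ (ρ (t + c) - ρ t) * (f0 t - f0 (t + c))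
      nlinarith [h1, h2]
  -- strict positivity on a small interval
  obtain ⟨ε, hε, hstr⟩ := hf0strict
  have hcont := hρc.continuousAt (x := (0 : ℝ))
  rw [Metric.continuousAt_iff] at hcont
  obtain ⟨δ, hδ, hδρ⟩ := hcont 1 one_pos
  have hρlt1 : ∀ t : ℝ, |t| < δ → ρ t < 1 := by
    intro t ht
    have h1 := hδρ (show dist t 0 < δ by simpa [Real.dist_eq] using ht)
    rw [hρz, Real.dist_eq, sub_zero] at h1
    exact lt_of_le_of_lt (le_abs_self _) h1
  set m : ℝ := min ε δ with hmdef
  have hm : 0 < m := lt_min hε hδ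
  obtain ⟨a, b, hab, hI⟩ : ∃ a b : ℝ, a < b ∧
      ∀ t ∈ Set.Ioo a b, |t| < m ∧ |t| < |t + c| := by
    rcases hc.lt_or_gt with hneg | hpos
    · refine ⟨-m, 0, by linarith, fun t ht => ?_⟩
      have h1 : t < 0 := ht.2
      have h2 : -m < t := ht.1
      have h3 : t + c < 0 := by linarith
      constructor
      · rw [abs_of_neg h1]; linarith
      · rw [abs_of_neg h1, abs_of_neg h3]; linarith
    · refine ⟨0, m, hm, fun t ht => ?_⟩
      have h1 : 0 < t := ht.1
      have h2 : t < m := ht.2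
      constructor
      · rw [abs_of_pos h1]; exact h2
      · rw [abs_of_pos h1, abs_of_pos (by linarith : (0:ℝ) < t + c)]; linarith
  have hpos_on : ∀ t ∈ Set.Ioo a b, 0 < h t := by
    intro t ht
    obtain ⟨htm, htc⟩ := hI t ht
    have htε : |t| < ε := lt_of_lt_of_le htm (min_le_left _ _)
    have htδ : |t| < δ := lt_of_lt_of_le htm (min_le_right _ _)
    have hf : f0 (t + c) < f0 t := by
      rcases le_or_gt |t + c| ε with hle | hlt
      · exact hstr t (t + c) htc hle
      · calc f0 (t + c) ≤ f0 ε := hf0mono ε (t + c) (by rw [abs_of_pos hε]; exact hlt.le)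
          _ < f0 t := hstr t ε (by rw [abs_of_pos hε]; exact htε) (abs_of_pos hε).le
    have hρlt : ρ t < ρ (t + c) := by
      have h1 : ρ t < 1 := hρlt1 t htδ
      rcases lt_or_eq_of_le (hρle (t + c)) with h2 | h2
      · have h3 := hρstrict |t| |t + c| (abs_nonneg t) htc (by rw [hρabs]; exact h2)
        rwa [hρabs, hρabs] at h3
      · rw [← h2] at h1; exact h1
    exact mul_pos (sub_pos.2 hρlt) (sub_pos.2 hf)
  have hsup : Set.Ioo a b ⊆ Function.support h := fun t ht => (hpos_on t ht).ne'
  have hμI : 0 < volume (Function.support h) := by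
    refine lt_of_lt_of_le ?_ (measure_mono hsup)
    rw [Real.volume_Ioo]
    exact ENNReal.ofReal_pos.2 (sub_pos.2 hab)
  have hpos : 0 < ∫ t, h t :=
    (integral_pos_iff_support_of_nonneg hnn hint).2 hμI
  linarith [hval ▸ hpos]

/-- If `u` has an even density, nonincreasing in `|t|` and strictly decreasing near `0`, and
`ρ` is a bounded rho-function, then `E ρ(u - c) > E ρ(u)` for every `c ≠ 0`. -/
theorem stmt2 {Ω : Type*} [MeasurableSpace Ω] (μ : Measure Ω) [IsProbabilityMeasure μ]
    (u : Ω → ℝ) (hu : Measurable u) (f0 : ℝ → ℝ) (hf0nn : ∀ t, 0 ≤ f0 t)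
    (hdens : μ.map u = MeasureTheory.volume.withDensity fun t => ENNReal.ofReal (f0 t))
    (hf0even : ∀ t, f0 (-t) = f0 t)
    (hf0mono : ∀ s t : ℝ, |s| ≤ |t| → f0 t ≤ f0 s)
    (hf0strict : ∃ ε > (0:ℝ), ∀ s t : ℝ, |s| < |t| → |t| ≤ ε → f0 t < f0 s)
    (ρ : ℝ → ℝ) (hρc : Continuous ρ) (hρe : ∀ t, ρ (-t) = ρ t) (hρz : ρ 0 = 0)
    (hρnn : ∀ t, 0 ≤ ρ t) (hρle : ∀ t, ρ t ≤ 1) (hρsup : (⨆ t, ρ t) = 1)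
    (hρmono : ∀ s t : ℝ, 0 ≤ s → s ≤ t → ρ s ≤ ρ t)
    (hρstrict : ∀ s t : ℝ, 0 ≤ s → s < t → ρ t < 1 → ρ s < ρ t) :
    ∀ c : ℝ, c ≠ 0 → ∫ ω, ρ (u ω) ∂μ < ∫ ω, ρ (u ω - c) ∂μ := by
  intro c hc
  have hf0meas : Measurable f0 := f0_meas' f0 hf0even hf0mono
  have hmap : IsProbabilityMeasure (μ.map u) := Measure.isProbabilityMeasure_map hu.aemeasurable
  have hlint : ∫⁻ t, ENNReal.ofReal (f0 t) = 1 := by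
    have h1 : (volume.withDensity fun t => ENNReal.ofReal (f0 t)) Set.univ = 1 := by
      rw [← hdens]; exact measure_univ
    rwa [withDensity_apply _ MeasurableSet.univ, setLIntegral_univ] at h1
  have hf0int : Integrable f0 := by
    refine ⟨hf0meas.aestronglyMeasurable, ?_⟩
    rw [HasFiniteIntegral]
    have h2 : ∀ a : ℝ, ‖f0 a‖ₑ = ENNReal.ofReal (f0 a) := fun a =>
      Real.enorm_eq_ofReal (hf0nn a)
    rw [lintegral_congr h2, hlint]
    exact ENNReal.one_lt_top
  have hconv : ∀ g : ℝ → ℝ, Continuous g → ∫ ω, g (u ω) ∂μ = ∫ t, g t * f0 t := by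
    intro g hg
    rw [← integral_map hu.aemeasurable hg.aestronglyMeasurable, hdens]
    have hd : (fun t : ℝ => ENNReal.ofReal (f0 t)) =
        fun t => ((Real.toNNReal (f0 t) : NNReal) : ENNReal) := rfl
    have hi := integral_withDensity_eq_integral_smul (μ := volume)
      (f := fun t => (f0 t).toNNReal) (measurable_real_toNNReal.comp hf0meas) g
    rw [hd, hi]
    congr 1; funext t
    rw [NNReal.smul_def, smul_eq_mul, Real.coe_toNNReal _ (hf0nn t), mul_comm]
  have h1 : ∫ ω, ρ (u ω) ∂μ = ∫ t, ρ t * f0 t := hconv ρ hρc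
  have h2 : ∫ ω, ρ (u ω - c) ∂μ = ∫ t, ρ (t - c) * f0 t :=
    hconv (fun t => ρ (t - c)) (hρc.comp (continuous_sub_right c))
  rw [h1, h2]
  exact key_ineq f0 hf0nn hf0even hf0mono hf0strict hf0meas hf0int ρ hρc hρe hρz hρnn hρle
    hρmono hρstrict c hc
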